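/- arXiv:1801.08507 — 3 statements merged into one kernel-verified Lean document; each statement's English description precedes it below -/
import Mathlib

section
/- Let $A \subseteq \mathbb{F}_2^n$ and let $f = \sum_{a \in A} y_a W_a$ with $\sum_{a\in A} y_a^2 = 1$. Let $m(A) = 1 + \max_{x \ne 0} |M_x|$, where $M_x = \{(a,b) \in A \times A : a+b = x\}$. Then $\mathbb{E} f^4 \le m(A)$. -/
open Finset

/-- The Walsh-Fourier character `W_a(x) = (-1)^⟨a,x⟩` on `{0,1}^n ≅ 𝔽₂ⁿ`. -/
def walsh {n : ℕ} (a x : Fin n → ZMod 2) : ℝ := (-1 : ℝ) ^ (∑ i, (a i * x i).val)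

/-- `|M_x| = |{(a,b) ∈ A × A : a + b = x}|`. -/
def Mcard {n : ℕ} (A : Finset (Fin n → ZMod 2)) (x : Fin n → ZMod 2) : ℕ :=
  ((A ×ˢ A).filter (fun p => p.1 + p.2 = x)).card

/-- `m(A) = 1 + max_{x ≠ 0} |M_x|`. -/
def mOf {n : ℕ} (A : Finset (Fin n → ZMod 2)) : ℕ :=
  1 + (Finset.univ.erase (0 : Fin n → ZMod 2)).sup (fun x => Mcard A x)

lemma neg_one_pow_mod_two (m : ℕ) : (-1 : ℝ) ^ (m % 2) = (-1 : ℝ) ^ m := by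
  conv_rhs => rw [← Nat.mod_add_div m 2]
  rw [pow_add, pow_mul, neg_one_sq, one_pow, mul_one]

lemma chi_add (u v : ZMod 2) : (-1 : ℝ) ^ ((u + v).val) = (-1:ℝ) ^ u.val * (-1:ℝ) ^ v.val := by
  rw [ZMod.val_add, neg_one_pow_mod_two, pow_add]

lemma walsh_prod {n : ℕ} (a x : Fin n → ZMod 2) :
    walsh a x = ∏ i, (-1 : ℝ) ^ ((a i * x i).val) := by
  rw [walsh, ← Finset.prod_pow_eq_pow_sum]

lemma walsh_mul {n : ℕ} (a b x : Fin n → ZMod 2) :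
    walsh a x * walsh b x = walsh (a + b) x := by
  simp only [walsh_prod, ← Finset.prod_mul_distrib]
  refine Finset.prod_congr rfl fun i _ => ?_
  rw [Pi.add_apply, add_mul, chi_add]

lemma sum_zmod2 (f : ZMod 2 → ℝ) : ∑ t : ZMod 2, f t = f 0 + f 1 := by
  rw [show (univ : Finset (ZMod 2)) = {0, 1} from by decide]
  rw [Finset.sum_insert (by decide), Finset.sum_singleton]

lemma sum_walsh {n : ℕ} (c : Fin n → ZMod 2) :
    ∑ x : Fin n → ZMod 2, walsh c x = if c = 0 then (2:ℝ)^n else 0 := by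
  simp only [walsh_prod]
  rw [← Fintype.prod_sum (fun i (t : ZMod 2) => (-1 : ℝ) ^ ((c i * t).val))]
  have key : ∀ u : ZMod 2, (∑ t : ZMod 2, (-1:ℝ) ^ ((u * t).val)) = if u = 0 then 2 else 0 := by
    intro u
    rw [sum_zmod2]
    rcases (by decide : ∀ u : ZMod 2, u = 0 ∨ u = 1) u with rfl | rfl <;>
      norm_num [show ((1:ZMod 2)).val = 1 from rfl, show ((0:ZMod 2)).val = 0 from rfl,
        show (1:ZMod 2) ≠ 0 from by decide]
  simp only [key]
  split_ifs with h
  · subst h; simp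
  · obtain ⟨i, hi⟩ := Function.ne_iff.mp h
    refine Finset.prod_eq_zero (Finset.mem_univ i) ?_
    simp only [if_neg (by simpa using hi)]

theorem stmt_2 (n : ℕ) (A : Finset (Fin n → ZMod 2)) (y : (Fin n → ZMod 2) → ℝ)
    (hy : ∑ a ∈ A, (y a) ^ 2 = 1) :
    (∑ x, (∑ a ∈ A, y a * walsh a x) ^ 4) / 2 ^ n ≤ (mOf A : ℝ) := by
  classical
  set g : (Fin n → ZMod 2) → ℝ :=
    fun s => ∑ p ∈ (A ×ˢ A).filter (fun p => p.1 + p.2 = s), y p.1 * y p.2 with hg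
  have hadd2 : ∀ u v : ZMod 2, u + v = 0 ↔ u = v := by decide
  have hadd : ∀ s t : Fin n → ZMod 2, s + t = 0 ↔ s = t := by
    intro s t
    constructor
    · intro h; funext i
      exact (hadd2 _ _).mp (congrFun h i)
    · rintro rfl; funext i
      exact (hadd2 (s i) (s i)).mpr rfl
  -- step A
  have hsq : ∀ x, (∑ a ∈ A, y a * walsh a x) ^ 2 = ∑ s, g s * walsh s x := by
    intro x
    have hterm : ∀ s : Fin n → ZMod 2, g s * walsh s x
        = ∑ p ∈ (A ×ˢ A).filter (fun p => p.1 + p.2 = s),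
            (y p.1 * walsh p.1 x) * (y p.2 * walsh p.2 x) := by
      intro s
      rw [hg, Finset.sum_mul]
      refine Finset.sum_congr rfl fun p hp => ?_
      have h2 := (Finset.mem_filter.mp hp).2
      rw [← h2, ← walsh_mul]; ring
    rw [Finset.sum_congr rfl (fun s _ => hterm s)]
    rw [Finset.sum_fiberwise_of_maps_to
      (g := fun p : (Fin n → ZMod 2) × (Fin n → ZMod 2) => p.1 + p.2)
      (t := univ) (fun p _ => Finset.mem_univ _)
      (fun p : (Fin n → ZMod 2) × (Fin n → ZMod 2) =>
        (y p.1 * walsh p.1 x) * (y p.2 * walsh p.2 x))]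
    rw [sq, Finset.sum_mul_sum, ← Finset.sum_product']
  -- step B
  have hquart : (∑ x, (∑ a ∈ A, y a * walsh a x) ^ 4) = 2 ^ n * ∑ s, (g s) ^ 2 := by
    have h4 : ∀ x, (∑ a ∈ A, y a * walsh a x) ^ 4 = (∑ s, g s * walsh s x) ^ 2 := by
      intro x; rw [show (4:ℕ) = 2*2 from rfl, pow_mul, hsq]
    have expand : ∀ x, (∑ s, g s * walsh s x) ^ 2
        = ∑ p : (Fin n → ZMod 2) × (Fin n → ZMod 2), g p.1 * g p.2 * walsh (p.1 + p.2) x := by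
      intro x
      rw [sq, Finset.sum_mul_sum, ← Finset.sum_product']
      refine Finset.sum_congr rfl fun p _ => ?_
      rw [← walsh_mul]; ring
    simp only [h4, expand]
    rw [Finset.sum_comm]
    have hx : ∀ p : (Fin n → ZMod 2) × (Fin n → ZMod 2),
        (∑ x, g p.1 * g p.2 * walsh (p.1 + p.2) x)
          = if p.1 = p.2 then g p.1 * g p.2 * 2 ^ n else 0 := by
      intro p
      rw [← Finset.mul_sum, sum_walsh]
      by_cases hc : p.1 = p.2
      · rw [if_pos ((hadd _ _).mpr hc), if_pos hc]
      · rw [if_neg (fun h => hc ((hadd _ _).mp h)), if_neg hc, mul_zero]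
    rw [Finset.sum_congr rfl (fun p _ => hx p)]
    rw [Fintype.sum_prod_type]
    rw [Finset.sum_congr rfl (fun s (_ : s ∈ univ) => Finset.sum_ite_eq univ s
      (fun t => g s * g t * 2 ^ n))]
    simp only [Finset.mem_univ, if_true]
    rw [Finset.mul_sum]
    refine Finset.sum_congr rfl fun s _ => by rw [sq]; ring
  -- g 0 = 1
  have hg0 : g 0 = 1 := by
    rw [hg, ← hy]
    refine Finset.sum_nbij' (fun p => p.1) (fun a => (a, a)) ?_ ?_ ?_ ?_ ?_
    · intro p hp
      exact (Finset.mem_product.mp (Finset.mem_filter.mp hp).1).1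
    · intro a ha
      simp only [Finset.mem_filter, Finset.mem_product]
      exact ⟨⟨ha, ha⟩, (hadd a a).mpr rfl⟩
    · intro p hp
      have h2 := (Finset.mem_filter.mp hp).2
      have h3 : p.1 = p.2 := (hadd p.1 p.2).mp h2
      simp [Prod.ext_iff, ← h3]
    · intro a ha; rfl
    · intro p hp
      have h3 : p.1 = p.2 := (hadd p.1 p.2).mp (Finset.mem_filter.mp hp).2
      rw [sq, ← h3]
  -- bound on the nonzero part
  set M : ℕ := (Finset.univ.erase (0 : Fin n → ZMod 2)).sup (fun x => Mcard A x) with hM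
  set T : (Fin n → ZMod 2) → ℝ :=
    fun s => ∑ p ∈ (A ×ˢ A).filter (fun p => p.1 + p.2 = s), (y p.1 * y p.2) ^ 2 with hT
  have hTnonneg : ∀ s, 0 ≤ T s := fun s => Finset.sum_nonneg fun p _ => sq_nonneg _
  have hTsum : ∑ s, T s = 1 := by
    rw [hT]
    rw [Finset.sum_fiberwise_of_maps_to
      (g := fun p : (Fin n → ZMod 2) × (Fin n → ZMod 2) => p.1 + p.2)
      (t := univ) (fun p _ => Finset.mem_univ _)
      (fun p : (Fin n → ZMod 2) × (Fin n → ZMod 2) => (y p.1 * y p.2) ^ 2)]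
    rw [Finset.sum_product]
    simp only [mul_pow]
    rw [← Finset.sum_mul_sum, hy, one_mul]
  have hbound : ∀ s ∈ Finset.univ.erase (0 : Fin n → ZMod 2), (g s)^2 ≤ (M : ℝ) * T s := by
    intro s hs
    have h1 : (g s)^2 ≤ (Mcard A s : ℝ) * T s := by
      have h0 := sq_sum_le_card_mul_sum_sq
        (s := (A ×ˢ A).filter (fun p => p.1 + p.2 = s)) (f := fun p => y p.1 * y p.2)
      rw [hg, hT, Mcard]
      beta_reduce
      exact_mod_cast h0
    refine h1.trans (mul_le_mul_of_nonneg_right ?_ (hTnonneg s))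
    exact_mod_cast Finset.le_sup (f := fun x => Mcard A x) hs
  have hS : ∑ s, (g s)^2 ≤ 1 + (M : ℝ) := by
    rw [← Finset.add_sum_erase _ _ (Finset.mem_univ (0 : Fin n → ZMod 2)), hg0]
    refine add_le_add (by norm_num) ((Finset.sum_le_sum hbound).trans ?_)
    rw [← Finset.mul_sum]
    have h2 : ∑ s ∈ Finset.univ.erase (0 : Fin n → ZMod 2), T s ≤ 1 := by
      rw [← hTsum]
      exact Finset.sum_le_sum_of_subset_of_nonneg (Finset.erase_subset _ _)
        (fun s _ _ => hTnonneg s)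
    calc (M:ℝ) * ∑ s ∈ Finset.univ.erase (0 : Fin n → ZMod 2), T s
        ≤ (M:ℝ) * 1 := mul_le_mul_of_nonneg_left h2 (Nat.cast_nonneg _)
      _ = M := mul_one _
  rw [hquart, mul_comm, mul_div_assoc, div_self (by positivity), mul_one]
  calc ∑ s, (g s)^2 ≤ 1 + (M : ℝ) := hS
    _ = (mOf A : ℝ) := by rw [mOf, hM]; push_cast; ring
end

section
/- For $0 \le t \le k \le n/2$ and $n \ge 1$, define $s_t(n,k) = \binom{n}{k}^{-2} \binom{n}{2t} \left(\binom{2t}{t}\binom{n-2t}{k-t}\right)^2$. Then for all $0 \le t \le k-1$, $s_t(n, k-1) \le s_t(n, k)$; consequently $r(n,k-1) \le r(n,k)$ where $r(n,k) = \sum_{t=0}^k s_t(n,k)$. -/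
open Finset

/-- `s_t(n,k) = binom(n,k)⁻² ⬝ binom(n,2t) ⬝ (binom(2t,t) binom(n-2t,k-t))²`. -/
noncomputable def s (n k t : ℕ) : ℝ :=
  ((n.choose (2 * t) * ((2 * t).choose t * (n - 2 * t).choose (k - t)) ^ 2 : ℕ) : ℝ) /
    ((n.choose k : ℝ)) ^ 2

lemma key_nat (n k t : ℕ) (hk : 1 ≤ k) (hkn : 2 * k ≤ n) (ht : t ≤ k - 1) :
    (n - 2 * t).choose (k - 1 - t) * n.choose k ≤
      (n - 2 * t).choose (k - t) * n.choose (k - 1) := by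
  have hQ : n.choose k * k = n.choose (k - 1) * (n - (k - 1)) := by
    have := Nat.choose_succ_right_eq n (k - 1)
    rwa [Nat.sub_add_cancel hk] at this
  have htk : t + 1 ≤ k := by omega
  have hB : (n - 2 * t).choose (k - t) * (k - t) =
      (n - 2 * t).choose (k - 1 - t) * ((n - 2 * t) - (k - 1 - t)) := by
    have := Nat.choose_succ_right_eq (n - 2 * t) (k - 1 - t)
    have h2 : k - 1 - t + 1 = k - t := by omega
    rwa [h2] at this
  set A := (n - 2 * t).choose (k - 1 - t)
  set B := (n - 2 * t).choose (k - t)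
  set P := n.choose (k - 1)
  set Q := n.choose k
  have hpos : 0 < k * (k - t) := Nat.mul_pos hk (by omega)
  have hmain : (n - (k - 1)) * (k - t) ≤ ((n - 2 * t) - (k - 1 - t)) * k := by
    have h1 : (n - 2 * t) - (k - 1 - t) = n - (k - 1) - t := by omega
    rw [h1]
    set a := n - (k - 1)
    have hak : k ≤ a := by omega
    have hta : t ≤ a := by omega
    obtain ⟨u, hu⟩ := Nat.exists_eq_add_of_le (show t ≤ k by omega)
    obtain ⟨b, hb⟩ : ∃ b, a = t + b := ⟨a - t, by omega⟩
    have hub : u ≤ b := by omega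
    have : k - t = u := by omega
    rw [this, hb]
    have : t + b - t = b := by omega
    rw [this]
    have : (t + b) * u = t * u + b * u := by ring
    rw [this, hu]
    have : b * (t + u) = b * t + b * u := by ring
    rw [this]
    have : t * u ≤ b * t := by
      calc t * u ≤ t * b := Nat.mul_le_mul_left t hub
      _ = b * t := Nat.mul_comm t b
    omega
  have hfinal : k * (k - t) * (A * Q) ≤ k * (k - t) * (B * P) := by
    calc k * (k - t) * (A * Q) = A * (Q * k) * (k - t) := by ring
      _ = A * (P * (n - (k - 1))) * (k - t) := by rw [hQ]
      _ = A * P * ((n - (k - 1)) * (k - t)) := by ring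
      _ ≤ A * P * (((n - 2 * t) - (k - 1 - t)) * k) := Nat.mul_le_mul_left _ hmain
      _ = (A * ((n - 2 * t) - (k - 1 - t))) * P * k := by ring
      _ = (B * (k - t)) * P * k := by rw [hB]
      _ = k * (k - t) * (B * P) := by ring
  exact Nat.le_of_mul_le_mul_left hfinal hpos

theorem stmt_9 (n k : ℕ) (hn : 1 ≤ n) (hk : 1 ≤ k) (hkn : 2 * k ≤ n) :
    (∀ t, t ≤ k - 1 → s n (k - 1) t ≤ s n k t) ∧
      (∑ t ∈ Finset.range k, s n (k - 1) t) ≤ (∑ t ∈ Finset.range (k + 1), s n k t) := by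
  have hkn' : k ≤ n := by omega
  have hQpos : 0 < n.choose k := Nat.choose_pos hkn'
  have hPpos : 0 < n.choose (k - 1) := Nat.choose_pos (by omega)
  have hmono : ∀ t, t ≤ k - 1 → s n (k - 1) t ≤ s n k t := by
    intro t ht
    unfold s
    rw [div_le_div_iff₀ (by positivity) (by positivity)]
    have hnat : n.choose (2 * t) * ((2 * t).choose t * (n - 2 * t).choose (k - 1 - t)) ^ 2
        * (n.choose k) ^ 2 ≤
        n.choose (2 * t) * ((2 * t).choose t * (n - 2 * t).choose (k - t)) ^ 2
        * (n.choose (k - 1)) ^ 2 := by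
      have h := key_nat n k t hk hkn ht
      have hsq : ((n - 2 * t).choose (k - 1 - t) * n.choose k) ^ 2 ≤
          ((n - 2 * t).choose (k - t) * n.choose (k - 1)) ^ 2 :=
        Nat.pow_le_pow_left h 2
      calc n.choose (2 * t) * ((2 * t).choose t * (n - 2 * t).choose (k - 1 - t)) ^ 2
            * (n.choose k) ^ 2
          = n.choose (2 * t) * ((2 * t).choose t) ^ 2 *
            ((n - 2 * t).choose (k - 1 - t) * n.choose k) ^ 2 := by ring
        _ ≤ n.choose (2 * t) * ((2 * t).choose t) ^ 2 *
            ((n - 2 * t).choose (k - t) * n.choose (k - 1)) ^ 2 :=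
            Nat.mul_le_mul_left _ hsq
        _ = n.choose (2 * t) * ((2 * t).choose t * (n - 2 * t).choose (k - t)) ^ 2
            * (n.choose (k - 1)) ^ 2 := by ring
    calc ((n.choose (2 * t) * ((2 * t).choose t * (n - 2 * t).choose (k - 1 - t)) ^ 2 : ℕ) : ℝ)
          * (n.choose k : ℝ) ^ 2
        = ((n.choose (2 * t) * ((2 * t).choose t * (n - 2 * t).choose (k - 1 - t)) ^ 2
            * (n.choose k) ^ 2 : ℕ) : ℝ) := by push_cast; ring
      _ ≤ ((n.choose (2 * t) * ((2 * t).choose t * (n - 2 * t).choose (k - t)) ^ 2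
            * (n.choose (k - 1)) ^ 2 : ℕ) : ℝ) := by exact_mod_cast Nat.cast_le.mpr hnat
      _ = ((n.choose (2 * t) * ((2 * t).choose t * (n - 2 * t).choose (k - t)) ^ 2 : ℕ) : ℝ)
          * (n.choose (k - 1) : ℝ) ^ 2 := by push_cast; ring
  refine ⟨hmono, ?_⟩
  have hnonneg : ∀ m t : ℕ, 0 ≤ s n m t := by
    intro m t; unfold s; positivity
  calc ∑ t ∈ Finset.range k, s n (k - 1) t
      ≤ ∑ t ∈ Finset.range k, s n k t := by
        apply Finset.sum_le_sum
        intro t ht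
        exact hmono t (by simp at ht; omega)
    _ ≤ ∑ t ∈ Finset.range (k + 1), s n k t := by
        apply Finset.sum_le_sum_of_subset_of_nonneg
        · exact Finset.range_subset_range.mpr (by omega)
        · intro t _ _; exact hnonneg k t
end

section
/- Let $a_0, a_1, b_0, b_1 > 0$ with $R_0 = a_0/b_0^2$ and $R_1 = a_1/b_1^2$ satisfying $R_1/9 < R_0 < 9R_1$. Then the supremum over $x \ge 0$ of $G(x) = \frac{a_1 x^2 + 6\sqrt{a_0 a_1}\, x + a_0}{b_1^2 x^2 + 2 b_0 b_1 x + b_0^2}$ equals $F(R_0, R_1) = \frac{8 R_0 R_1}{4\sqrt{R_0 R_1} - (\sqrt{R_0}-\sqrt{R_1})^2}$, attained at $x = \frac{\sqrt{a_0}}{\sqrt{a_1}} \cdot \frac{3\sqrt{R_1} - \sqrt{R_0}}{3\sqrt{R_0} - \sqrt{R_1}}$. -/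
/-- `F(x,y) = 8xy / (4√(xy) - (√x - √y)²)`. -/
noncomputable def F (x y : ℝ) : ℝ :=
  8 * x * y / (4 * Real.sqrt (x * y) - (Real.sqrt x - Real.sqrt y) ^ 2)

set_option maxHeartbeats 1000000 in
theorem stmt_12 (a₀ a₁ b₀ b₁ R₀ R₁ : ℝ)
    (ha₀ : 0 < a₀) (ha₁ : 0 < a₁) (hb₀ : 0 < b₀) (hb₁ : 0 < b₁)
    (hR₀ : R₀ = a₀ / b₀ ^ 2) (hR₁ : R₁ = a₁ / b₁ ^ 2)
    (h1 : R₁ / 9 < R₀) (h2 : R₀ < 9 * R₁)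
    (G : ℝ → ℝ)
    (hG : ∀ x, G x = (a₁ * x ^ 2 + 6 * Real.sqrt (a₀ * a₁) * x + a₀) /
        (b₁ ^ 2 * x ^ 2 + 2 * b₀ * b₁ * x + b₀ ^ 2)) :
    (∀ x, 0 ≤ x → G x ≤ F R₀ R₁) ∧
      G (Real.sqrt a₀ / Real.sqrt a₁ *
          ((3 * Real.sqrt R₁ - Real.sqrt R₀) / (3 * Real.sqrt R₀ - Real.sqrt R₁))) =
        F R₀ R₁ := by
  have hR₀pos : 0 < R₀ := by rw [hR₀]; positivity
  have hR₁pos : 0 < R₁ := by rw [hR₁]; positivity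
  set p := Real.sqrt R₀ with hp_def
  set q := Real.sqrt R₁ with hq_def
  have hp : 0 < p := Real.sqrt_pos.mpr hR₀pos
  have hq : 0 < q := Real.sqrt_pos.mpr hR₁pos
  have hp2 : p ^ 2 = R₀ := Real.sq_sqrt hR₀pos.le
  have hq2 : q ^ 2 = R₁ := Real.sq_sqrt hR₁pos.le
  have ha₀' : a₀ = p ^ 2 * b₀ ^ 2 := by rw [hp2, hR₀]; field_simp
  have ha₁' : a₁ = q ^ 2 * b₁ ^ 2 := by rw [hq2, hR₁]; field_simp
  have hsa₀ : Real.sqrt a₀ = p * b₀ := by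
    rw [ha₀']; rw [show p ^ 2 * b₀ ^ 2 = (p * b₀) ^ 2 by ring]
    exact Real.sqrt_sq (by positivity)
  have hsa₁ : Real.sqrt a₁ = q * b₁ := by
    rw [ha₁']; rw [show q ^ 2 * b₁ ^ 2 = (q * b₁) ^ 2 by ring]
    exact Real.sqrt_sq (by positivity)
  have hsa : Real.sqrt (a₀ * a₁) = p * q * b₀ * b₁ := by
    rw [Real.sqrt_mul ha₀.le, hsa₀, hsa₁]; ring
  have hqp : q < 3 * p := by nlinarith [hp2, hq2]
  have hpq : p < 3 * q := by nlinarith [hp2, hq2]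
  have hM : 0 < 6 * p * q - p ^ 2 - q ^ 2 := by nlinarith
  have hF : F R₀ R₁ = 8 * p ^ 2 * q ^ 2 / (6 * p * q - p ^ 2 - q ^ 2) := by
    rw [F, Real.sqrt_mul hR₀pos.le, ← hp_def, ← hq_def, ← hp2, ← hq2]; ring_nf
  constructor
  · intro x hx
    have hD : 0 < b₁ ^ 2 * x ^ 2 + 2 * b₀ * b₁ * x + b₀ ^ 2 := by
      have h1' : 0 ≤ b₁ ^ 2 * x ^ 2 := by positivity
      have h2' : 0 ≤ 2 * b₀ * b₁ * x := by positivity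
      nlinarith [sq_nonneg b₀]
    rw [hG, hF, hsa, ha₀', ha₁', div_le_div_iff₀ hD hM]
    have key : 8 * p ^ 2 * q ^ 2 * (b₁ ^ 2 * x ^ 2 + 2 * b₀ * b₁ * x + b₀ ^ 2) -
        (q ^ 2 * b₁ ^ 2 * x ^ 2 + 6 * (p * q * b₀ * b₁) * x + p ^ 2 * b₀ ^ 2) *
          (6 * p * q - p ^ 2 - q ^ 2) =
        (b₁ * q * (3 * p - q) * x - b₀ * p * (3 * q - p)) ^ 2 := by ring
    nlinarith [sq_nonneg (b₁ * q * (3 * p - q) * x - b₀ * p * (3 * q - p)), key]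
  · rw [hG, hF, hsa, hsa₀, hsa₁]
    set x := p * b₀ / (q * b₁) * ((3 * q - p) / (3 * p - q)) with hx_def
    have hxpos : 0 < x := by
      apply mul_pos
      · positivity
      · apply div_pos <;> linarith
    have hD : 0 < b₁ ^ 2 * x ^ 2 + 2 * b₀ * b₁ * x + b₀ ^ 2 := by
      have h1' : 0 ≤ b₁ ^ 2 * x ^ 2 := by positivity
      have h2' : 0 ≤ 2 * b₀ * b₁ * x := hxpos.le |> fun h => by positivity
      nlinarith [sq_nonneg b₀]
    have hne1 : (3 : ℝ) * p - q ≠ 0 := by linarith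
    rw [ha₀', ha₁']
    rw [div_eq_div_iff hD.ne' hM.ne']
    rw [hx_def]
    have hne2 : p * 3 - q ≠ 0 := by linarith
    field_simp
    ring
end
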